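/- On a surface P with an elliptic fibration f_e over a rational base, suppose K_P ≡ Σ(m_i − 1)F_i with multiple fibres m_iF_i, and suppose an effective divisor B' satisfies B'·K_P = 2 and B'·F_i ≡ 0 (mod 2) for all i (where F_i is numerically 1/m_i of a general fibre F_e). Then K_P is numerically equivalent to ½F_e. -/
import Mathlib


/-- Case 2: numerical classes on `P` with Kodaira dimension 1.  If
`K_P ≡ Σ(m_i − 1)F_i` with multiple fibres `m_iF_i` (so `m_i • F_i = F_e`
numerically, `m_i ≥ 2`), and an intersection functional `B` (intersection with
the effective divisor `B̄'`) satisfies `B·K_P = 2`, `B·F_i` even for all `i`,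
`B·F_i ≥ 0` and `B·F_e > 0`, then `K_P` is numerically `½F_e`. -/
theorem KP_is_half_fibre {M : Type*} [AddCommGroup M] [Module ℚ M]
    (n : ℕ) (Fe : M) (Fi : Fin n → M) (m : Fin n → ℕ)
    (hm : ∀ i, 2 ≤ m i)
    (hFi : ∀ i, (m i : ℚ) • Fi i = Fe)
    (B : M →ₗ[ℚ] ℚ)
    (hK : B (∑ i, ((m i : ℚ) - 1) • Fi i) = 2)
    (heven : ∀ i, ∃ k : ℤ, B (Fi i) = 2 * k)
    (hnonneg : ∀ i, 0 ≤ B (Fi i))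
    (hpos : 0 < B Fe) :
    (∑ i, ((m i : ℚ) - 1) • Fi i) = (1 / 2 : ℚ) • Fe := by
  -- values B (Fi i)
  have hmpos : ∀ i, (0:ℚ) < (m i : ℚ) := by
    intro i; exact_mod_cast lt_of_lt_of_le (by norm_num) (hm i)
  have hBFi : ∀ i, (m i : ℚ) * B (Fi i) = B Fe := by
    intro i
    have := congrArg B (hFi i)
    simpa [map_smul, smul_eq_mul] using this
  have hBFipos : ∀ i, 0 < B (Fi i) := by
    intro i
    have h := hBFi i
    by_contra h0
    push_neg at h0
    have : (m i : ℚ) * B (Fi i) ≤ 0 :=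
      mul_nonpos_of_nonneg_of_nonpos (le_of_lt (hmpos i)) h0
    rw [h] at this
    exact absurd hpos (not_lt.mpr this)
  have hBFi2 : ∀ i, (2:ℚ) ≤ B (Fi i) := by
    intro i
    obtain ⟨k, hk⟩ := heven i
    have hkpos : 0 < k := by
      by_contra hk0
      push_neg at hk0
      have : B (Fi i) ≤ 0 := by
        rw [hk]
        have : (k:ℚ) ≤ 0 := by exact_mod_cast hk0
        nlinarith
      exact absurd (hBFipos i) (not_lt.mpr this)
    have : (1:ℚ) ≤ (k:ℚ) := by exact_mod_cast hkpos
    rw [hk]; linarith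
  -- rewrite hK as a sum of scalars
  have hKs : ∑ i, ((m i : ℚ) - 1) * B (Fi i) = 2 := by
    rw [← hK, map_sum]
    simp [map_smul, smul_eq_mul]
  have hterm : ∀ i : Fin n, (2:ℚ) ≤ ((m i : ℚ) - 1) * B (Fi i) := by
    intro i
    have h1 : (1:ℚ) ≤ (m i : ℚ) - 1 := by
      have : (2:ℚ) ≤ (m i : ℚ) := by exact_mod_cast hm i
      linarith
    nlinarith [hBFi2 i]
  -- n = 1
  have hn1 : n = 1 := by
    rcases Nat.lt_or_ge n 1 with h | h
    · interval_cases n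
      simp at hKs
    · rcases Nat.lt_or_ge n 2 with h2 | h2
      · omega
      · exfalso
        have hcard : (2:ℚ) * n ≤ ∑ i : Fin n, ((m i : ℚ) - 1) * B (Fi i) := by
          calc (2:ℚ) * n = ∑ _i : Fin n, (2:ℚ) := by
                simp [Finset.sum_const, mul_comm]
            _ ≤ _ := Finset.sum_le_sum fun i _ => hterm i
        rw [hKs] at hcard
        have : (2:ℚ) * 2 ≤ 2 * n := by
          have : (2:ℚ) ≤ (n:ℚ) := by exact_mod_cast h2
          nlinarith
        linarith
  subst hn1
  -- single index
  have hK0 : ((m 0 : ℚ) - 1) * B (Fi 0) = 2 := by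
    simpa [Fin.sum_univ_one] using hKs
  obtain ⟨k, hk⟩ := heven 0
  have hkpos : (1:ℚ) ≤ (k:ℚ) := by
    have := hBFi2 0
    rw [hk] at this
    have : (1:ℚ) ≤ (k:ℚ) := by linarith
    exact this
  have hm1 : (1:ℚ) ≤ (m 0 : ℚ) - 1 := by
    have : (2:ℚ) ≤ (m 0 : ℚ) := by exact_mod_cast hm 0
    linarith
  -- (m-1) * 2k = 2 with m-1 ≥ 1 and k ≥ 1 forces m = 2, k = 1
  have hm2 : (m 0 : ℚ) = 2 := by
    rw [hk] at hK0
    nlinarith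
  have hFe : (2:ℚ) • Fi 0 = Fe := by
    have := hFi 0
    rw [hm2] at this
    exact this
  rw [Fin.sum_univ_one, hm2, ← hFe]
  rw [smul_smul]
  norm_num
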